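/- Let X be a real inner product space, x, y ∈ X and 0 < m < M. If ⟨M•y − x, x − m•y⟩ ≥ 0, then 0 ≤ ‖x‖·‖y‖ − |⟨x,y⟩| ≤ (1/2)·((√M − √m)²/√(M·m))·|⟨x,y⟩|. -/

import Mathlib

open scoped RealInnerProductSpace

theorem reverse_cbs_real_additive {X : Type*} [NormedAddCommGroup X]
    [InnerProductSpace ℝ X] (x y : X) (m M : ℝ) (hm : 0 < m) (hmM : m < M)
    (h : 0 ≤ ⟪M • y - x, x - m • y⟫) :
    0 ≤ ‖x‖ * ‖y‖ - |⟪x, y⟫| ∧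
      ‖x‖ * ‖y‖ - |⟪x, y⟫| ≤
        (1 / 2) * ((Real.sqrt M - Real.sqrt m) ^ 2 / Real.sqrt (M * m)) *
          |⟪x, y⟫| := by
  have hM : 0 < M := hm.trans hmM
  have hMm : 0 < M * m := mul_pos hM hm
  have key : ‖x‖ ^ 2 + M * m * ‖y‖ ^ 2 ≤ (M + m) * ⟪x, y⟫ := by
    have := h
    simp only [inner_sub_left, inner_sub_right, real_inner_smul_left,
      real_inner_smul_right, real_inner_comm y x,
      real_inner_self_eq_norm_sq] at this
    nlinarith [this, real_inner_comm x y]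
  set s := Real.sqrt (M * m) with hs
  have hs2 : s ^ 2 = M * m := Real.sq_sqrt hMm.le
  have hspos : 0 < s := Real.sqrt_pos.mpr hMm
  have amgm : 2 * s * (‖x‖ * ‖y‖) ≤ ‖x‖ ^ 2 + M * m * ‖y‖ ^ 2 := by
    nlinarith [sq_nonneg (‖x‖ - s * ‖y‖)]
  have hnn : 0 ≤ ‖x‖ * ‖y‖ := mul_nonneg (norm_nonneg x) (norm_nonneg y)
  have hinner : 0 ≤ ⟪x, y⟫ := by nlinarith
  have habs : |⟪x, y⟫| = ⟪x, y⟫ := abs_of_nonneg hinner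
  have hcs := abs_real_inner_le_norm x y
  constructor
  · linarith
  · rw [habs]
    have hsq : (Real.sqrt M - Real.sqrt m) ^ 2 = M + m - 2 * s := by
      have hMs : Real.sqrt M ^ 2 = M := Real.sq_sqrt hM.le
      have hms : Real.sqrt m ^ 2 = m := Real.sq_sqrt hm.le
      have : s = Real.sqrt M * Real.sqrt m := Real.sqrt_mul hM.le m
      rw [this]; ring_nf; nlinarith
    rw [hsq]
    have heq : (1/2) * ((M + m - 2*s)/s) * ⟪x, y⟫
        = ((M + m) * ⟪x, y⟫ - 2 * s * ⟪x, y⟫) / (2 * s) := by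
      field_simp
    rw [heq, le_div_iff₀ (by positivity)]
    nlinarith
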